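/- Let B be a topological space and b₁,…,b_r : B → ℂ continuous functions with r ≥ 1. Let U = ⋃ᵢ {x : bᵢ(x) ≠ 0} and F = {(x,ℓ) ∈ U × ℂ^r : ∑ᵢ bᵢ(x)ℓᵢ = 1}. Then the projection π : F → U is a homotopy equivalence. -/

import Mathlib

open Complex ContinuousMap

theorem projection_homotopyEquiv
    {B : Type*} [TopologicalSpace B] {r : ℕ} (hr : 1 ≤ r)
    (b : Fin r → B → ℂ) (hb : ∀ i, Continuous (b i))
    (U : Set B) (hU : U = ⋃ i, {x : B | b i x ≠ 0})
    (F : Set (B × (Fin r → ℂ)))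
    (hF : F = {p : B × (Fin r → ℂ) | p.1 ∈ U ∧ ∑ i, b i p.1 * p.2 i = 1}) :
    ∃ h : ContinuousMap.HomotopyEquiv F U,
      ∀ p : F, (h.toFun p : B) = (p : B × (Fin r → ℂ)).1 := by
  classical
  -- the "norm" function
  set N : B → ℂ := fun x => ∑ j, b j x * (starRingEnd ℂ) (b j x) with hNdef
  have hNcont : Continuous N :=
    continuous_finset_sum _ fun j _ => (hb j).mul (Complex.continuous_conj.comp (hb j))
  have hNne : ∀ x ∈ U, N x ≠ 0 := by
    intro x hx
    rw [hU] at hx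
    rcases Set.mem_iUnion.1 hx with ⟨i, hi⟩
    have h1 : N x = ((∑ j, Complex.normSq (b j x) : ℝ) : ℂ) := by
      push_cast
      simp [hNdef, Complex.mul_conj]
    rw [h1]
    have hpos : 0 < ∑ j, Complex.normSq (b j x) :=
      Finset.sum_pos' (fun j _ => Complex.normSq_nonneg _)
        ⟨i, Finset.mem_univ i, Complex.normSq_pos.2 hi⟩
    exact_mod_cast hpos.ne'
  -- the section values
  set s : B → Fin r → ℂ := fun x i => (starRingEnd ℂ) (b i x) / N x with hsdef
  have hsum : ∀ x ∈ U, ∑ i, b i x * s x i = 1 := by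
    intro x hx
    have : ∑ i, b i x * s x i = (∑ i, b i x * (starRingEnd ℂ) (b i x)) / N x := by
      rw [Finset.sum_div]
      exact Finset.sum_congr rfl fun i _ => by rw [hsdef, mul_div_assoc]
    rw [this]
    exact div_self (hNne x hx)
  have memF : ∀ p : B × (Fin r → ℂ), p ∈ F ↔ p.1 ∈ U ∧ ∑ i, b i p.1 * p.2 i = 1 := by
    intro p; rw [hF]; rfl
  -- projection
  have hπcont : Continuous (fun p : F => (⟨(p : B × (Fin r → ℂ)).1,
      ((memF _).1 p.2).1⟩ : U)) :=
    (continuous_fst.comp continuous_subtype_val).subtype_mk _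
  set π : C(F, U) := ⟨_, hπcont⟩ with hπdef
  -- section
  have hσmem : ∀ x : U, ((x : B), s x) ∈ F := by
    intro x
    exact (memF _).2 ⟨x.2, hsum x x.2⟩
  have hσcont : Continuous (fun x : U => (⟨((x : B), s x), hσmem x⟩ : F)) := by
    refine Continuous.subtype_mk ?_ _
    refine continuous_subtype_val.prodMk (continuous_pi fun i => ?_)
    exact ((Complex.continuous_conj.comp ((hb i).comp continuous_subtype_val)).div
      (hNcont.comp continuous_subtype_val) (fun x => hNne x x.2))
  set σ : C(U, F) := ⟨_, hσcont⟩ with hσdef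
  -- homotopy from σ ∘ π to id
  have hHmem : ∀ (t : ℂ) (p : F),
      (((p : B × (Fin r → ℂ)).1,
        fun i => (1 - t) * s (p : B × (Fin r → ℂ)).1 i + t * (p : B × (Fin r → ℂ)).2 i)
        : B × (Fin r → ℂ)) ∈ F := by
    intro t p
    obtain ⟨hU1, hS1⟩ := (memF _).1 p.2
    refine (memF _).2 ⟨hU1, ?_⟩
    have : ∑ i, b i (p : B × (Fin r → ℂ)).1 *
        ((1 - t) * s (p : B × (Fin r → ℂ)).1 i + t * (p : B × (Fin r → ℂ)).2 i)
        = (1 - t) * ∑ i, b i (p : B × (Fin r → ℂ)).1 * s (p : B × (Fin r → ℂ)).1 i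
          + t * ∑ i, b i (p : B × (Fin r → ℂ)).1 * (p : B × (Fin r → ℂ)).2 i := by
      rw [Finset.mul_sum, Finset.mul_sum, ← Finset.sum_add_distrib]
      exact Finset.sum_congr rfl fun i _ => by ring
    rw [this, hsum _ hU1, hS1]
    ring
  have hHcont : Continuous (fun q : (unitInterval × F) =>
      (⟨((q.2 : B × (Fin r → ℂ)).1,
        fun i => (1 - ((q.1 : ℝ) : ℂ)) * s (q.2 : B × (Fin r → ℂ)).1 i
          + ((q.1 : ℝ) : ℂ) * (q.2 : B × (Fin r → ℂ)).2 i), hHmem _ _⟩ : F)) := by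
    have hx : Continuous (fun q : (unitInterval × F) => (q.2 : B × (Fin r → ℂ)).1) :=
      continuous_fst.comp (continuous_subtype_val.comp continuous_snd)
    have ht : Continuous (fun q : (unitInterval × F) => ((q.1 : ℝ) : ℂ)) :=
      Complex.continuous_ofReal.comp (continuous_subtype_val.comp continuous_fst)
    refine Continuous.subtype_mk (hx.prodMk (continuous_pi fun i => ?_)) _
    have hs : Continuous (fun q : (unitInterval × F) => s (q.2 : B × (Fin r → ℂ)).1 i) :=
      (Complex.continuous_conj.comp ((hb i).comp hx)).div (hNcont.comp hx)
        (fun q => hNne _ ((memF _).1 q.2.2).1)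
    have hl : Continuous (fun q : (unitInterval × F) => (q.2 : B × (Fin r → ℂ)).2 i) :=
      (continuous_apply i).comp (continuous_snd.comp (continuous_subtype_val.comp continuous_snd))
    exact ((continuous_const.sub ht).mul hs).add (ht.mul hl)
  have left_inv : (σ.comp π).Homotopic (ContinuousMap.id F) := by
    refine ⟨⟨⟨_, hHcont⟩, ?_, ?_⟩⟩
    · intro p
      apply Subtype.ext
      simp
      rfl
    · intro p
      apply Subtype.ext
      simp
  have right_inv : (π.comp σ).Homotopic (ContinuousMap.id U) := by
    have : π.comp σ = ContinuousMap.id U := by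
      ext x; rfl
    rw [this]
  refine ⟨⟨π, σ, left_inv, right_inv⟩, fun p => rfl⟩
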